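/- For n = 2^m with m ≥ 1, the bit-reversal permutation graph G_n on 2n vertices has reversible pebbling price at most 2·log n + 2. -/

import Mathlib

open MvPolynomial

/-- A finite directed graph. -/
structure FinDigraph where
  V : Type
  [instFintype : Fintype V]
  Edge : V → V → Prop

attribute [instance] FinDigraph.instFintype

namespace FinDigraph

/-- The set of (immediate) predecessors of a vertex. -/
def pred (G : FinDigraph) (v : G.V) : Set G.V := {u | G.Edge u v}

/-- A directed graph is acyclic if no vertex reaches itself by a nonempty path. -/
def Acyclic (G : FinDigraph) : Prop := ∀ v, ¬ Relation.TransGen G.Edge v v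

/-- A sink is a vertex with no outgoing edge. -/
def IsSink (G : FinDigraph) (z : G.V) : Prop := ∀ u, ¬ G.Edge z u

/-- `z` is the unique sink of `G`. -/
def UniqueSink (G : FinDigraph) (z : G.V) : Prop :=
  G.IsSink z ∧ ∀ v, G.IsSink v → v = z

/-- One legal move of the reversible pebble game: place a pebble on a vertex all of whose
predecessors are pebbled, or remove a pebble from such a vertex. -/
def RevMove (G : FinDigraph) (P Q : Set G.V) : Prop :=
  ∃ v, G.pred v ⊆ P ∧
    ((v ∉ P ∧ Q = insert v P) ∨ (v ∈ P ∧ Q = P \ {v}))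

/-- One legal move of the standard pebble game: place a pebble on a vertex all of whose
predecessors are pebbled, or remove a pebble from an arbitrary vertex. -/
def StdMove (G : FinDigraph) (P Q : Set G.V) : Prop :=
  (∃ v, G.pred v ⊆ P ∧ v ∉ P ∧ Q = insert v P) ∨ (∃ v, v ∈ P ∧ Q = P \ {v})

/-- A reversible pebbling of `G` (with sink `z`) with time `t`. -/
def IsRevPebbling (G : FinDigraph) (z : G.V) (t : ℕ) (P : ℕ → Set G.V) : Prop :=
  P 0 = ∅ ∧ P t = ∅ ∧ (∃ i ≤ t, z ∈ P i) ∧ ∀ i < t, G.RevMove (P i) (P (i + 1))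

/-- A standard pebbling of `G` (with sink `z`) with time `t`. -/
def IsStdPebbling (G : FinDigraph) (z : G.V) (t : ℕ) (P : ℕ → Set G.V) : Prop :=
  P 0 = ∅ ∧ P t = ∅ ∧ (∃ i ≤ t, z ∈ P i) ∧ ∀ i < t, G.StdMove (P i) (P (i + 1))

/-- The space of a pebbling: the maximal number of pebbles in any configuration. -/
noncomputable def space (G : FinDigraph) (t : ℕ) (P : ℕ → Set G.V) : ℕ :=
  (Finset.range (t + 1)).sup fun i => (P i).ncard

end FinDigraph

/-- Reversal of the `m`-bit binary representation of `i`. -/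
def bitRev (m i : ℕ) : ℕ :=
  ∑ j ∈ Finset.range m, if Nat.testBit i j then 2 ^ (m - 1 - j) else 0

/-- The bit-reversal permutation graph on `2 * 2^m` vertices: a bottom directed path
(`Sum.inl`), a top directed path (`Sum.inr`), and an edge from the `i`-th bottom vertex to the
`σ(i)`-th top vertex, where `σ` reverses the `m`-bit binary representation (0-indexed). -/
def BRGraph (m : ℕ) : FinDigraph where
  V := Fin (2 ^ m) ⊕ Fin (2 ^ m)
  Edge a b :=
    match a, b with
    | Sum.inl i, Sum.inl j => (j : ℕ) = (i : ℕ) + 1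
    | Sum.inr i, Sum.inr j => (j : ℕ) = (i : ℕ) + 1
    | Sum.inl i, Sum.inr j => (j : ℕ) = bitRev m (i : ℕ)
    | Sum.inr _, Sum.inl _ => False

/-- The unique sink of the bit-reversal permutation graph: the last vertex of the top path. -/
def brSink (m : ℕ) : (BRGraph m).V :=
  Sum.inr ⟨2 ^ m - 1, by have : 0 < 2 ^ m := (by positivity); omega⟩

namespace Peb

variable (G : FinDigraph) [DecidableEq G.V]

def stepc (c : Finset G.V) (a : Bool × G.V) : Finset G.V :=
  if a.1 then insert a.2 c else c.erase a.2

def runc : Finset G.V → List (Bool × G.V) → Finset G.V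
  | c, [] => c
  | c, a :: M => runc (stepc G c a) M

def confs : Finset G.V → List (Bool × G.V) → List (Finset G.V)
  | c, [] => [c]
  | c, a :: M => c :: confs (stepc G c a) M

def Legal : Finset G.V → List (Bool × G.V) → Prop
  | _, [] => True
  | c, a :: M => G.pred a.2 ⊆ ↑c ∧ (if a.1 then a.2 ∉ c else a.2 ∈ c) ∧ Legal (stepc G c a) M

def invm (M : List (Bool × G.V)) : List (Bool × G.V) :=
  (M.map fun a => (!a.1, a.2)).reverse

variable {G}

lemma runc_append (A B : List (Bool × G.V)) : ∀ c, runc G c (A ++ B) = runc G (runc G c A) B := by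
  induction A with
  | nil => intro c; rfl
  | cons a A ih =>
    intro c
    show runc G (stepc G c a) (A ++ B) = runc G (runc G (stepc G c a) A) B
    exact ih _

lemma legal_append (A B : List (Bool × G.V)) :
    ∀ c, Legal G c (A ++ B) ↔ Legal G c A ∧ Legal G (runc G c A) B := by
  induction A with
  | nil => intro c; simp [Legal, runc]
  | cons a A ih =>
    intro c
    show (G.pred a.2 ⊆ ↑c ∧ _ ∧ Legal G (stepc G c a) (A ++ B)) ↔ _
    rw [ih]
    show _ ↔ (G.pred a.2 ⊆ ↑c ∧ _ ∧ Legal G (stepc G c a) A) ∧ _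
    constructor
    · rintro ⟨h1, h2, h3, h4⟩; exact ⟨⟨h1, h2, h3⟩, h4⟩
    · rintro ⟨⟨h1, h2, h3⟩, h4⟩; exact ⟨h1, h2, h3, h4⟩

lemma mem_confs_append {A B : List (Bool × G.V)} {c x : Finset G.V}
    (h : x ∈ confs G c (A ++ B)) : x ∈ confs G c A ∨ x ∈ confs G (runc G c A) B := by
  induction A generalizing c with
  | nil => right; exact h
  | cons a A ih =>
    simp only [List.cons_append, confs, List.mem_cons] at h ⊢
    rcases h with h | h
    · left; left; exact h
    · rcases ih h with h | h
      · left; right; exact h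
      · right; exact h

lemma self_mem_confs (c : Finset G.V) (M : List (Bool × G.V)) : c ∈ confs G c M := by
  cases M <;> simp [confs]

lemma runc_mem_confs (M : List (Bool × G.V)) : ∀ c, runc G c M ∈ confs G c M := by
  induction M with
  | nil => intro c; simp [confs, runc]
  | cons a M ih => intro c; simp only [confs, runc, List.mem_cons]; right; exact ih _

lemma invm_append (A B : List (Bool × G.V)) : invm G (A ++ B) = invm G B ++ invm G A := by
  simp [invm]

lemma mem_invm {M : List (Bool × G.V)} {a : Bool × G.V} (h : a ∈ invm G M) :
    ∃ b ∈ M, b.2 = a.2 := by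
  simp only [invm, List.mem_reverse, List.mem_map] at h
  obtain ⟨b, hb, rfl⟩ := h
  exact ⟨b, hb, rfl⟩

/-- Inverting a legal sequence. Needs no self-loops. -/
lemma invm_spec (hns : ∀ v : G.V, v ∉ G.pred v) (M : List (Bool × G.V)) :
    ∀ c, Legal G c M →
      Legal G (runc G c M) (invm G M) ∧ runc G (runc G c M) (invm G M) = c ∧
      ∀ x ∈ confs G (runc G c M) (invm G M), x ∈ confs G c M := by
  induction M with
  | nil => intro c _; exact ⟨trivial, rfl, by simp [confs, runc, invm]⟩
  | cons a M ih =>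
    obtain ⟨b, v⟩ := a
    intro c hL
    obtain ⟨hpred, hmem, hL'⟩ := hL
    obtain ⟨ih1, ih2, ih3⟩ := ih (stepc G c (b, v)) hL'
    have hrun : runc G c ((b, v) :: M) = runc G (stepc G c (b, v)) M := rfl
    have hinv : invm G ((b, v) :: M) = invm G M ++ [(!b, v)] := by simp [invm]
    have hstep : G.pred v ⊆ ↑(stepc G c (b, v)) ∧
        (if (!b) = true then v ∉ stepc G c (b, v) else v ∈ stepc G c (b, v)) ∧
        stepc G (stepc G c (b, v)) (!b, v) = c := by
      cases b with
      | true =>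
        have hmem' : v ∉ c := by simpa using hmem
        have e1 : stepc G c (true, v) = insert v c := rfl
        have e2 : ∀ d : Finset G.V, stepc G d (!true, v) = d.erase v := fun _ => rfl
        rw [e1, e2]
        refine ⟨?_, ?_, ?_⟩
        · rw [Finset.coe_insert]; exact hpred.trans (Set.subset_insert _ _)
        · simp
        · exact Finset.erase_insert hmem'
      | false =>
        have hmem' : v ∈ c := by simpa using hmem
        have e1 : stepc G c (false, v) = c.erase v := rfl
        have e2 : ∀ d : Finset G.V, stepc G d (!false, v) = insert v d := fun _ => rfl
        rw [e1, e2]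
        refine ⟨?_, ?_, ?_⟩
        · rw [Finset.coe_erase]
          intro u hu
          exact ⟨hpred hu, by rintro rfl; exact hns _ hu⟩
        · simp
        · exact Finset.insert_erase hmem' 
    obtain ⟨hs1, hs2, hs3⟩ := hstep
    rw [hrun, hinv]
    refine ⟨?_, ?_, ?_⟩
    · rw [legal_append]
      refine ⟨ih1, ?_⟩
      rw [ih2]
      exact ⟨hs1, hs2, trivial⟩
    · rw [runc_append, ih2]
      simp only [runc, hs3]
    · intro x hx
      rcases mem_confs_append hx with hx | hx
      · simp only [confs, List.mem_cons]; right; exact ih3 x hx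
      · rw [ih2] at hx
        simp only [confs, List.mem_cons, hs3] at hx
        rcases hx with rfl | hx
        · simp only [confs, List.mem_cons]; right; exact self_mem_confs _ _
        · simp only [confs, List.mem_cons]
          left
          simpa [confs] using hx

/-- Adding an untouched pebble preserves legality. -/
lemma insert_spec {w : G.V} (M : List (Bool × G.V)) :
    ∀ c, (∀ a ∈ M, a.2 ≠ w) → Legal G c M →
      Legal G (insert w c) M ∧ runc G (insert w c) M = insert w (runc G c M) ∧
      ∀ x ∈ confs G (insert w c) M, ∃ y ∈ confs G c M, x = insert w y := by
  induction M with
  | nil =>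
    intro c _ _
    exact ⟨trivial, rfl, by intro x hx; exact ⟨c, self_mem_confs _ _, by simpa [confs] using hx⟩⟩
  | cons a M ih =>
    obtain ⟨b, v⟩ := a
    intro c hw hL
    obtain ⟨hpred, hmem, hL'⟩ := hL
    have hvw : v ≠ w := hw (b, v) List.mem_cons_self
    have hstep : stepc G (insert w c) (b, v) = insert w (stepc G c (b, v)) := by
      cases b with
      | true =>
        have e1 : ∀ d : Finset G.V, stepc G d (true, v) = insert v d := fun _ => rfl
        rw [e1, e1]; exact Finset.insert_comm _ _ _
      | false =>
        have e1 : ∀ d : Finset G.V, stepc G d (false, v) = d.erase v := fun _ => rfl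
        rw [e1, e1, Finset.erase_insert_of_ne (Ne.symm hvw)]
    obtain ⟨ih1, ih2, ih3⟩ := ih (stepc G c (b, v))
      (fun a ha => hw a (List.mem_cons_of_mem _ ha)) hL'
    refine ⟨?_, ?_, ?_⟩
    · refine ⟨hpred.trans (by rw [Finset.coe_insert]; exact Set.subset_insert _ _), ?_, ?_⟩
      · cases b with
        | true =>
          have : v ∉ c := by simpa using hmem
          simp [this, hvw]
        | false =>
          have : v ∈ c := by simpa using hmem
          simp [this]
      · rw [hstep]; exact ih1
    · show runc G (stepc G (insert w c) (b, v)) M = _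
      rw [hstep, ih2]; rfl
    · intro x hx
      simp only [confs, List.mem_cons] at hx
      rcases hx with rfl | hx
      · exact ⟨c, self_mem_confs _ _, rfl⟩
      · rw [hstep] at hx
        obtain ⟨y, hy, rfl⟩ := ih3 x hx
        exact ⟨y, by simp only [confs, List.mem_cons]; right; exact hy, rfl⟩

lemma runc_take_mem (M : List (Bool × G.V)) : ∀ j c, runc G c (M.take j) ∈ confs G c M := by
  induction M with
  | nil => intro j c; simp [runc, confs, List.take_nil]
  | cons a M ih =>
    intro j c
    cases j with
    | zero => exact self_mem_confs _ _
    | succ j =>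
      show runc G c (a :: M.take j) ∈ _
      simp only [confs, List.mem_cons]
      right
      exact ih j _

lemma move_take (M : List (Bool × G.V)) :
    ∀ j c, Legal G c M → j < M.length →
      G.RevMove ↑(runc G c (M.take j)) ↑(runc G c (M.take (j + 1))) := by
  induction M with
  | nil => intro j c _ h; simp at h
  | cons a M ih =>
    intro j c hL hlen
    obtain ⟨hpred, hmem, hL'⟩ := hL
    cases j with
    | zero =>
      obtain ⟨b, v⟩ := a
      show G.RevMove ↑c ↑(stepc G c (b, v))
      refine ⟨v, hpred, ?_⟩
      cases b with
      | true =>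
        have h1 : v ∉ c := by simpa using hmem
        have e1 : stepc G c (true, v) = insert v c := rfl
        left
        exact ⟨by simpa using h1, by rw [e1, Finset.coe_insert]⟩
      | false =>
        have h1 : v ∈ c := by simpa using hmem
        have e1 : stepc G c (false, v) = c.erase v := rfl
        right
        exact ⟨by simpa using h1, by rw [e1, Finset.coe_erase]⟩
    | succ j =>
      show G.RevMove ↑(runc G (stepc G c a) (M.take j)) ↑(runc G (stepc G c a) (M.take (j + 1)))
      exact ih j _ hL' (by simp at hlen; omega)

variable (G)

def put (mk : ℕ → List (Bool × G.V)) : ℕ → ℕ → List (Bool × G.V)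
  | _, 0 => []
  | i, 1 => mk (i + 1)
  | i, (d+2) => put mk i ((d+2)/2) ++
      (put mk (i + (d+2)/2) ((d+2) - (d+2)/2) ++ invm G (put mk i ((d+2)/2)))
  termination_by _ d => d
  decreasing_by all_goals omega

variable {G}

lemma put_spec (hns : ∀ v : G.V, v ∉ G.pred v)
    (f : ℕ → G.V) (mk : ℕ → List (Bool × G.V)) (Trans : G.V → Prop) (eb : ℕ) :
    ∀ d i c, 1 ≤ d →
    (∀ k k', i < k → k ≤ i + d → i < k' → k' ≤ i + d → f k = f k' → k = k') →
    (∀ k, i < k → k ≤ i + d → ¬ Trans (f k)) →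
    (∀ k c', i < k → k ≤ i + d → (k = 1 ∨ f (k - 1) ∈ c') → f k ∉ c' →
        (∀ v ∈ c', ¬ Trans v) →
        Legal G c' (mk k) ∧ runc G c' (mk k) = insert (f k) c' ∧
        (∀ a ∈ mk k, a.2 = f k ∨ Trans a.2) ∧
        (∀ x ∈ confs G c' (mk k), ∃ (b : Bool) (E : Finset G.V), (∀ v ∈ E, Trans v) ∧
            E.card ≤ eb ∧ x = (c' ∪ (if b then {f k} else ∅)) ∪ E)) →
    (i = 0 ∨ f i ∈ c) →
    (∀ k, i < k → k ≤ i + d → f k ∉ c) →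
    (∀ v ∈ c, ¬ Trans v) →
    Legal G c (put G mk i d) ∧
    runc G c (put G mk i d) = insert (f (i + d)) c ∧
    (∀ a ∈ put G mk i d, (∃ k, i < k ∧ k ≤ i + d ∧ a.2 = f k) ∨ Trans a.2) ∧
    (∀ x ∈ confs G c (put G mk i d), ∃ (S : Finset ℕ) (E : Finset G.V),
        (∀ k ∈ S, i < k ∧ k ≤ i + d) ∧ S.card ≤ Nat.clog 2 d + 1 ∧
        (∀ v ∈ E, Trans v) ∧ E.card ≤ eb ∧ x = (c ∪ S.image f) ∪ E) := by
  intro d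
  induction d using Nat.strong_induction_on with
  | _ d IH =>
  intro i c hd Hinj Htr Hmk hbase hfresh hgood
  match d, hd with
  | 1, _ =>
    have hput : put G mk i 1 = mk (i + 1) := by simp only [put]
    have hb : (i + 1 = 1 ∨ f (i + 1 - 1) ∈ c) := by
      rcases hbase with rfl | h
      · left; rfl
      · right; simpa using h
    obtain ⟨L, R, V, C⟩ := Hmk (i + 1) c (by omega) (by omega) hb
      (hfresh _ (by omega) (by omega)) hgood
    rw [hput]
    refine ⟨L, R, ?_, ?_⟩
    · intro a ha
      rcases V a ha with h | h
      · exact Or.inl ⟨i + 1, by omega, by omega, h⟩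
      · exact Or.inr h
    · intro x hx
      obtain ⟨b, E, hE, hEc, rfl⟩ := C x hx
      refine ⟨if b then {i + 1} else ∅, E, ?_, ?_, hE, hEc, ?_⟩
      · intro k hk
        cases b <;> simp at hk
        omega
      · have h1 : Nat.clog 2 1 = 0 := Nat.clog_of_right_le_one le_rfl 2
        cases b <;> simp [h1]
      · cases b <;> simp
  | (d+2), _ =>
    have hput : put G mk i (d + 2) = put G mk i ((d+2)/2) ++
        (put G mk (i + (d+2)/2) ((d+2) - (d+2)/2) ++ invm G (put G mk i ((d+2)/2))) := by
      simp only [put]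
    set D := d + 2 with hD
    set h := D / 2 with hh
    set d2 := D - h with hd2
    have hfacts : 1 ≤ h ∧ 1 ≤ d2 ∧ h ≤ d2 ∧ h + d2 = D ∧ h < D ∧ d2 < D := by omega
    obtain ⟨hf1, hf2, hf3, hf4, hf5, hf6⟩ := hfacts
    have hclog : Nat.clog 2 D = Nat.clog 2 d2 + 1 := by
      rw [Nat.clog_of_two_le (by norm_num) (by omega)]
      congr 2
      omega
    have hclogh : Nat.clog 2 h ≤ Nat.clog 2 d2 := Nat.clog_mono_right 2 hf3
    -- part 1
    obtain ⟨L1, R1, V1, C1⟩ := IH h hf5 i c hf1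
      (fun k k' a b a' b' => Hinj k k' a (by omega) a' (by omega))
      (fun k a b => Htr k a (by omega))
      (fun k c' a b => Hmk k c' a (by omega))
      hbase (fun k a b => hfresh k a (by omega)) hgood
    set c1 := insert (f (i + h)) c with hc1
    -- part 2
    have hfkih : ∀ k, i + h < k → k ≤ i + D → f k ∉ c1 := by
      intro k hk1 hk2
      rw [hc1]
      simp only [Finset.mem_insert]
      push_neg
      constructor
      · intro he
        have := Hinj k (i + h) (by omega) (by omega) (by omega) (by omega) he
        omega
      · exact hfresh k (by omega) (by omega)
    have hgood1 : ∀ v ∈ c1, ¬ Trans v := by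
      intro v hv
      rw [hc1, Finset.mem_insert] at hv
      rcases hv with rfl | hv
      · exact Htr _ (by omega) (by omega)
      · exact hgood v hv
    obtain ⟨L2, R2, V2, C2⟩ := IH d2 hf6 (i + h) c1 hf2
      (fun k k' a b a' b' => Hinj k k' (by omega) (by omega) (by omega) (by omega))
      (fun k a b => Htr k (by omega) (by omega))
      (fun k c' a b => Hmk k c' (by omega) (by omega))
      (Or.inr (Finset.mem_insert_self _ _))
      (fun k a b => hfkih k a (by omega))
      hgood1
    have hR1 : runc G c (put G mk i h) = c1 := R1
    have hiD : i + h + d2 = i + D := by omega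
    set w := f (i + D) with hw
    have hR2 : runc G c1 (put G mk (i + h) d2) = insert w c1 := by
      rw [R2, hiD]
    -- part 3 : inverse of part 1, with w inserted
    have hwV : ∀ a ∈ put G mk i h, a.2 ≠ w := by
      intro a ha he
      rcases V1 a ha with ⟨k, hk1, hk2, hk3⟩ | htr
      · rw [hk3, hw] at he
        have := Hinj k (i + D) (by omega) (by omega) (by omega) (by omega) he
        omega
      · rw [he] at htr
        exact Htr _ (by omega) (by omega) htr
    obtain ⟨I1, I2, I3⟩ := invm_spec hns (put G mk i h) c L1
    rw [hR1] at I1 I2 I3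
    obtain ⟨N1, N2, N3⟩ := insert_spec (w := w) (invm G (put G mk i h)) c1
      (fun a ha => by obtain ⟨b, hb, he⟩ := mem_invm ha; rw [← he]; exact hwV b hb) I1
    rw [hput]
    refine ⟨?_, ?_, ?_, ?_⟩
    · rw [legal_append]
      refine ⟨L1, ?_⟩
      rw [hR1, legal_append]
      refine ⟨L2, ?_⟩
      rw [hR2]
      exact N1
    · rw [runc_append, hR1, runc_append, hR2, N2, I2]
    · intro a ha
      simp only [List.mem_append] at ha
      rcases ha with ha | ha | ha
      · rcases V1 a ha with ⟨k, h1, h2, h3⟩ | htr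
        · exact Or.inl ⟨k, by omega, by omega, h3⟩
        · exact Or.inr htr
      · rcases V2 a ha with ⟨k, h1, h2, h3⟩ | htr
        · exact Or.inl ⟨k, by omega, by omega, h3⟩
        · exact Or.inr htr
      · obtain ⟨b, hb, he⟩ := mem_invm ha
        rcases V1 b hb with ⟨k, h1, h2, h3⟩ | htr
        · exact Or.inl ⟨k, by omega, by omega, by rw [← he, h3]⟩
        · exact Or.inr (he ▸ htr)
    · intro x hx
      rcases mem_confs_append hx with hx | hx
      · obtain ⟨S, E, hS, hSc, hE, hEc, rfl⟩ := C1 x hx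
        refine ⟨S, E, ?_, ?_, hE, hEc, rfl⟩
        · intro k hk; have := hS k hk; omega
        · omega
      · rw [hR1] at hx
        rcases mem_confs_append hx with hx | hx
        · obtain ⟨S, E, hS, hSc, hE, hEc, rfl⟩ := C2 x hx
          refine ⟨insert (i + h) S, E, ?_, ?_, hE, hEc, ?_⟩
          · intro k hk
            rw [Finset.mem_insert] at hk
            rcases hk with rfl | hk
            · omega
            · have := hS k hk; omega
          · calc (insert (i + h) S).card ≤ S.card + 1 := Finset.card_insert_le _ _
              _ ≤ Nat.clog 2 D + 1 := by omega
          · rw [Finset.image_insert, hc1]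
            ext v
            simp only [Finset.mem_union, Finset.mem_insert]
            tauto
        · rw [hR2] at hx
          obtain ⟨y, hy, rfl⟩ := N3 x hx
          obtain ⟨S, E, hS, hSc, hE, hEc, rfl⟩ := C1 y (I3 y hy)
          refine ⟨insert (i + D) S, E, ?_, ?_, hE, hEc, ?_⟩
          · intro k hk
            rw [Finset.mem_insert] at hk
            rcases hk with rfl | hk
            · omega
            · have := hS k hk; omega
          · calc (insert (i + D) S).card ≤ S.card + 1 := Finset.card_insert_le _ _
              _ ≤ Nat.clog 2 D + 1 := by omega
          · rw [Finset.image_insert]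
            ext v
            simp only [Finset.mem_union, Finset.mem_insert, hw]
            tauto

end Peb


-- ===== bitRev facts =====

lemma geom_two (m : ℕ) : ∑ j ∈ Finset.range m, 2 ^ j = 2 ^ m - 1 := by
  induction m with
  | zero => simp
  | succ M ih =>
    rw [Finset.sum_range_succ, ih]
    have : 0 < 2 ^ M := by positivity
    rw [pow_succ]; omega

lemma bitRev_lt (m i : ℕ) : bitRev m i < 2 ^ m := by
  have h1 : bitRev m i ≤ ∑ j ∈ Finset.range m, 2 ^ (m - 1 - j) := by
    apply Finset.sum_le_sum
    intro j _
    split <;> simp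
  rw [Finset.sum_range_reflect (fun j => 2 ^ j) m, geom_two] at h1
  have : 0 < 2 ^ m := by positivity
  omega

lemma sumBits_testBit (M : ℕ) : ∀ (g : ℕ → Bool) (t : ℕ),
    Nat.testBit (∑ j ∈ Finset.range M, if g j then 2 ^ j else 0) t
      = (decide (t < M) && g t) := by
  induction M with
  | zero => intro g t; simp
  | succ M ih =>
    intro g t
    have hsum : (∑ j ∈ Finset.range (M+1), if g j then 2 ^ j else 0)
        = 2 * (∑ j ∈ Finset.range M, if g (j+1) then 2 ^ j else 0)
          + (if g 0 then 1 else 0) := by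
      rw [Finset.sum_range_succ' (fun j => if g j then 2 ^ j else 0) M]
      rw [Finset.mul_sum]
      congr 1
      apply Finset.sum_congr rfl
      intro j _
      by_cases h : g (j+1) <;> simp [h, pow_succ, mul_comm]
    rw [hsum]
    cases t with
    | zero =>
      rw [Nat.testBit_zero]
      by_cases h : g 0 <;> simp [h, Nat.mul_add_mod, Nat.add_mul_mod_self_left]
    | succ t =>
      rw [Nat.testBit_succ]
      have h2 : (2 * (∑ j ∈ Finset.range M, if g (j+1) then 2 ^ j else 0)
          + (if g 0 then 1 else 0)) / 2
          = ∑ j ∈ Finset.range M, if g (j+1) then 2 ^ j else 0 := by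
        by_cases h : g 0 <;> simp [h] <;> omega
      rw [h2, ih (fun j => g (j+1)) t]
      simp [Nat.succ_lt_succ_iff]

lemma testBit_bitRev (m i t : ℕ) :
    Nat.testBit (bitRev m i) t = (decide (t < m) && Nat.testBit i (m - 1 - t)) := by
  have hsum : bitRev m i
      = ∑ j ∈ Finset.range m, if Nat.testBit i (m - 1 - j) then 2 ^ j else 0 := by
    unfold bitRev
    rw [← Finset.sum_range_reflect (fun j => if Nat.testBit i (m - 1 - j) then 2 ^ j else 0) m]
    apply Finset.sum_congr rfl
    intro j hj
    simp only [Finset.mem_range] at hj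
    have : m - 1 - (m - 1 - j) = j := by omega
    rw [this]
  rw [hsum, sumBits_testBit]

lemma bitRev_bitRev {m i : ℕ} (hi : i < 2 ^ m) : bitRev m (bitRev m i) = i := by
  apply Nat.eq_of_testBit_eq
  intro t
  rw [testBit_bitRev, testBit_bitRev]
  by_cases ht : t < m
  · have h1 : m - 1 - t < m := by omega
    have h2 : m - 1 - (m - 1 - t) = t := by omega
    simp [ht, h1, h2]
  · have : i < 2 ^ t := lt_of_lt_of_le hi (Nat.pow_le_pow_right (by norm_num) (by omega))
    simp [ht, Nat.testBit_eq_false_of_lt this]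

-- ===== vertices and predecessors of BRGraph =====

instance BRdec (m : ℕ) : DecidableEq (BRGraph m).V :=
  inferInstanceAs (DecidableEq (Fin (2^m) ⊕ Fin (2^m)))

section BR

variable {m : ℕ}

lemma npow_pos : 0 < 2 ^ m := by positivity

/-- bottom vertex with 1-indexed label `k`. -/
def bvx (m k : ℕ) : (BRGraph m).V := Sum.inl ⟨(k - 1) % 2 ^ m, Nat.mod_lt _ npow_pos⟩

/-- top vertex with 1-indexed label `k`. -/
def tvx (m k : ℕ) : (BRGraph m).V := Sum.inr ⟨(k - 1) % 2 ^ m, Nat.mod_lt _ npow_pos⟩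

lemma bvx_val {k : ℕ} (hk : k ≤ 2 ^ m) :
    bvx m k = Sum.inl ⟨k - 1, by have := npow_pos (m := m); omega⟩ := by
  unfold bvx
  congr 1
  exact Fin.ext (Nat.mod_eq_of_lt (by have := npow_pos (m := m); omega))

lemma tvx_val {k : ℕ} (hk : k ≤ 2 ^ m) :
    tvx m k = Sum.inr ⟨k - 1, by have := npow_pos (m := m); omega⟩ := by
  unfold tvx
  congr 1
  exact Fin.ext (Nat.mod_eq_of_lt (by have := npow_pos (m := m); omega))

lemma bvx_inj {k k' : ℕ} (h1 : 1 ≤ k) (h2 : k ≤ 2 ^ m) (h1' : 1 ≤ k') (h2' : k' ≤ 2 ^ m)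
    (he : bvx m k = bvx m k') : k = k' := by
  rw [bvx_val h2, bvx_val h2'] at he
  have := Sum.inl.inj he
  have := Fin.val_eq_val _ _ |>.mpr this
  simp at this
  omega

lemma tvx_inj {k k' : ℕ} (h1 : 1 ≤ k) (h2 : k ≤ 2 ^ m) (h1' : 1 ≤ k') (h2' : k' ≤ 2 ^ m)
    (he : tvx m k = tvx m k') : k = k' := by
  rw [tvx_val h2, tvx_val h2'] at he
  have := Sum.inr.inj he
  have := Fin.val_eq_val _ _ |>.mpr this
  simp at this
  omega

lemma br_noselfloop : ∀ v : (BRGraph m).V, v ∉ (BRGraph m).pred v := by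
  intro v hv
  match v with
  | Sum.inl i =>
    have h : (i : ℕ) = (i : ℕ) + 1 := hv
    omega
  | Sum.inr i =>
    have h : (i : ℕ) = (i : ℕ) + 1 := hv
    omega

lemma pred_inl_subset {j : Fin (2 ^ m)} {c : Finset (BRGraph m).V}
    (h : ∀ i : Fin (2 ^ m), (j : ℕ) = (i : ℕ) + 1 → Sum.inl i ∈ c) :
    (BRGraph m).pred (Sum.inl j) ⊆ ↑c := by
  intro u hu
  match u with
  | Sum.inl i =>
    have h2 : (j : ℕ) = (i : ℕ) + 1 := hu
    exact Finset.mem_coe.mpr (h i h2)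
  | Sum.inr i =>
    exact absurd hu (fun h => h)

lemma pred_inr_subset {j : Fin (2 ^ m)} {c : Finset (BRGraph m).V}
    (h1 : ∀ i : Fin (2 ^ m), (j : ℕ) = (i : ℕ) + 1 → Sum.inr i ∈ c)
    (h2 : ∀ i : Fin (2 ^ m), (j : ℕ) = bitRev m (i : ℕ) → Sum.inl i ∈ c) :
    (BRGraph m).pred (Sum.inr j) ⊆ ↑c := by
  intro u hu
  match u with
  | Sum.inl i =>
    have hh : (j : ℕ) = bitRev m (i : ℕ) := hu
    exact Finset.mem_coe.mpr (h2 i hh)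
  | Sum.inr i =>
    have hh : (j : ℕ) = (i : ℕ) + 1 := hu
    exact Finset.mem_coe.mpr (h1 i hh)

end BR


-- ===== the strategy for the bit-reversal graph =====

open Peb

/-- elementary pebble placement on the bottom path. -/
def bmk (m : ℕ) : ℕ → List (Bool × (BRGraph m).V) := fun k => [(true, bvx m k)]

/-- reversibly pebble the bottom vertex with 0-indexed position `p`. -/
def bput (m p : ℕ) : List (Bool × (BRGraph m).V) := put (BRGraph m) (bmk m) 0 (p + 1)

lemma bput_spec {m : ℕ} (p : ℕ) (hp : p < 2 ^ m) (c : Finset (BRGraph m).V)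
    (hc : ∀ i : Fin (2 ^ m), Sum.inl i ∉ c) :
    Legal (BRGraph m) c (bput m p) ∧
    runc (BRGraph m) c (bput m p) = insert (bvx m (p + 1)) c ∧
    (∀ a ∈ bput m p, ∃ i : Fin (2 ^ m), a.2 = Sum.inl i) ∧
    (∀ x ∈ confs (BRGraph m) c (bput m p), ∃ E : Finset (BRGraph m).V,
      (∀ v ∈ E, ∃ i : Fin (2 ^ m), v = Sum.inl i) ∧ E.card ≤ m + 1 ∧ x = c ∪ E) := by
  have Hinj : ∀ k k' : ℕ, 0 < k → k ≤ 0 + (p + 1) → 0 < k' → k' ≤ 0 + (p + 1) →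
      bvx m k = bvx m k' → k = k' := by
    intro k k' a b a' b' he
    exact bvx_inj (by omega) (by omega) (by omega) (by omega) he
  have Htr : ∀ k : ℕ, 0 < k → k ≤ 0 + (p + 1) → ¬ (fun _ : (BRGraph m).V => False) (bvx m k) :=
    fun _ _ _ h => h
  have Hmk : ∀ (k : ℕ) (c' : Finset (BRGraph m).V), 0 < k → k ≤ 0 + (p + 1) →
      (k = 1 ∨ bvx m (k - 1) ∈ c') → bvx m k ∉ c' →
      (∀ v ∈ c', ¬ (fun _ : (BRGraph m).V => False) v) →
      Legal (BRGraph m) c' (bmk m k) ∧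
      runc (BRGraph m) c' (bmk m k) = insert (bvx m k) c' ∧
      (∀ a ∈ bmk m k, a.2 = bvx m k ∨ (fun _ : (BRGraph m).V => False) a.2) ∧
      (∀ x ∈ confs (BRGraph m) c' (bmk m k), ∃ (b : Bool) (E : Finset (BRGraph m).V),
          (∀ v ∈ E, (fun _ : (BRGraph m).V => False) v) ∧ E.card ≤ 0 ∧
          x = (c' ∪ (if b then {bvx m k} else ∅)) ∪ E) := by
    intro k c' hk0 hk1 hb hnot _
    have hk2 : k ≤ 2 ^ m := by omega
    refine ⟨⟨?_, by simpa using hnot, trivial⟩, rfl, ?_, ?_⟩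
    · rw [bvx_val hk2]
      apply pred_inl_subset
      intro i hi
      have hi' : k - 1 = (i : ℕ) + 1 := hi
      rcases hb with rfl | hb
      · simp at hi'
      · have hk3 : (2:ℕ) ≤ k := by omega
        have : Sum.inl i = bvx m (k - 1) := by
          rw [bvx_val (by omega)]
          congr 1
          exact Fin.ext (by simp at hi ⊢; omega)
        rw [this]; exact hb
    · intro a ha
      left
      simp only [bmk, List.mem_singleton] at ha
      rw [ha]
    · intro x hx
      have hconfs : confs (BRGraph m) c' (bmk m k) = [c', insert (bvx m k) c'] := rfl
      rw [hconfs] at hx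
      simp only [List.mem_cons, List.mem_singleton, List.not_mem_nil, or_false] at hx
      rcases hx with rfl | rfl
      · exact ⟨false, ∅, by simp, by simp, by simp⟩
      · refine ⟨true, ∅, by simp, by simp, ?_⟩
        ext v
        simp [Finset.mem_insert, or_comm]
  have H := put_spec (G := BRGraph m) br_noselfloop (bvx m) (bmk m)
    (fun _ => False) 0 (p + 1) 0 c (by omega) Hinj Htr Hmk (Or.inl rfl)
    (fun k hk1 hk2 => by rw [bvx_val (by omega)]; exact hc _)
    (fun v _ h => h)
  obtain ⟨L, R, V, C⟩ := H
  refine ⟨L, ?_, ?_, ?_⟩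
  · show runc (BRGraph m) c (put (BRGraph m) (bmk m) 0 (p + 1)) = _
    rw [R, Nat.zero_add]
  · intro a ha
    rcases V a ha with ⟨k, _, _, h3⟩ | h
    · exact ⟨_, h3⟩
    · exact absurd h (fun h => h)
  · intro x hx
    obtain ⟨S, E, hS, hSc, hE, hEc, rfl⟩ := C x hx
    have hE0 : E = ∅ := Finset.eq_empty_of_forall_notMem (fun v hv => hE v hv)
    refine ⟨S.image (bvx m), ?_, ?_, by rw [hE0, Finset.union_empty]⟩
    · intro v hv
      simp only [Finset.mem_image] at hv
      obtain ⟨k, _, rfl⟩ := hv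
      exact ⟨_, rfl⟩
    · calc (S.image (bvx m)).card ≤ S.card := Finset.card_image_le
        _ ≤ Nat.clog 2 (p + 1) + 1 := hSc
        _ ≤ m + 1 := by
            have h1 : Nat.clog 2 (p + 1) ≤ Nat.clog 2 (2 ^ m) :=
              Nat.clog_mono_right 2 (by omega)
            rw [Nat.clog_pow 2 m (by norm_num)] at h1
            omega

/-- the wrapped placement of the top vertex with 1-indexed label `k`:
pebble the bottom neighbour, place the top pebble, unpebble the bottom. -/
def tmk (m : ℕ) : ℕ → List (Bool × (BRGraph m).V) := fun k =>
  bput m (bitRev m (k - 1)) ++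
    ([(true, tvx m k)] ++ invm (BRGraph m) (bput m (bitRev m (k - 1))))

lemma tmk_spec {m : ℕ} (k : ℕ) (c' : Finset (BRGraph m).V) (hk0 : 0 < k) (hk : k ≤ 2 ^ m)
    (hbase : k = 1 ∨ tvx m (k - 1) ∈ c') (hnot : tvx m k ∉ c')
    (hgood : ∀ v ∈ c', ¬ (∃ i : Fin (2 ^ m), v = Sum.inl i)) :
    Legal (BRGraph m) c' (tmk m k) ∧
    runc (BRGraph m) c' (tmk m k) = insert (tvx m k) c' ∧
    (∀ a ∈ tmk m k, a.2 = tvx m k ∨ (∃ i : Fin (2 ^ m), a.2 = Sum.inl i)) ∧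
    (∀ x ∈ confs (BRGraph m) c' (tmk m k), ∃ (b : Bool) (E : Finset (BRGraph m).V),
      (∀ v ∈ E, ∃ i : Fin (2 ^ m), v = Sum.inl i) ∧ E.card ≤ m + 1 ∧
      x = (c' ∪ (if b then {tvx m k} else ∅)) ∪ E) := by
  set p := bitRev m (k - 1) with hp
  have hplt : p < 2 ^ m := bitRev_lt m (k - 1)
  obtain ⟨L1, R1, V1, C1⟩ := bput_spec p hplt c' (fun i hi => hgood _ hi ⟨i, rfl⟩)
  set c1 := insert (bvx m (p + 1)) c' with hc1
  have hbvtv : ∀ q q' : ℕ, bvx m q ≠ tvx m q' := by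
    intro q q' h
    simp [bvx, tvx] at h
  -- the middle move
  have hmid : Legal (BRGraph m) c1 [(true, tvx m k)] := by
    refine ⟨?_, ?_, trivial⟩
    · rw [tvx_val hk]
      apply pred_inr_subset
      · intro i hi
        have hi' : k - 1 = (i : ℕ) + 1 := hi
        rcases hbase with rfl | hb
        · simp at hi'
        · have : Sum.inr i = tvx m (k - 1) := by
            rw [tvx_val (by omega)]
            congr 1
            exact Fin.ext (by simp at hi ⊢; omega)
          rw [this, hc1]
          exact Finset.mem_insert_of_mem hb
      · intro i hi
        have hi' : k - 1 = bitRev m (i : ℕ) := hi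
        have hival : (i : ℕ) = p := by
          rw [hp, hi', bitRev_bitRev i.isLt]
        have : Sum.inl i = bvx m (p + 1) := by
          rw [bvx_val (by omega)]
          congr 1
          exact Fin.ext (by simpa using hival)
        rw [this, hc1]
        exact Finset.mem_insert_self _ _
    · simp only [if_pos rfl]
      rw [hc1, Finset.mem_insert]
      push_neg
      exact ⟨fun h => hbvtv _ _ h.symm, hnot⟩
  have hmidrun : runc (BRGraph m) c1 [(true, tvx m k)] = insert (tvx m k) c1 := rfl
  set w := tvx m k with hwdef
  have hwV : ∀ a ∈ bput m p, a.2 ≠ w := by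
    intro a ha he
    obtain ⟨i, hi⟩ := V1 a ha
    rw [he] at hi
    rw [hwdef] at hi
    simp [tvx] at hi
  obtain ⟨I1, I2, I3⟩ := invm_spec br_noselfloop (bput m p) c' L1
  rw [R1] at I1 I2 I3
  obtain ⟨N1, N2, N3⟩ := insert_spec (w := w) (invm (BRGraph m) (bput m p)) c1
    (fun a ha => by obtain ⟨b, hb, he⟩ := mem_invm ha; rw [← he]; exact hwV b hb) I1
  have htmk : tmk m k = bput m p ++
      ([(true, tvx m k)] ++ invm (BRGraph m) (bput m p)) := rfl
  refine ⟨?_, ?_, ?_, ?_⟩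
  · rw [htmk, legal_append, R1, legal_append, hmidrun]
    exact ⟨L1, hmid, N1⟩
  · rw [htmk, runc_append, R1, runc_append, hmidrun, N2, I2]
  · intro a ha
    rw [htmk] at ha
    simp only [List.mem_append, List.mem_singleton] at ha
    rcases ha with ha | rfl | ha
    · exact Or.inr (V1 a ha)
    · exact Or.inl rfl
    · obtain ⟨b, hb, he⟩ := mem_invm ha
      exact Or.inr (he ▸ V1 b hb)
  · intro x hx
    rw [htmk] at hx
    rcases mem_confs_append hx with hx | hx
    · obtain ⟨E, hE, hEc, rfl⟩ := C1 x hx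
      exact ⟨false, E, hE, hEc, by simp⟩
    · rw [R1] at hx
      rcases mem_confs_append hx with hx | hx
      · have hconfs : confs (BRGraph m) c1 [(true, tvx m k)] = [c1, insert (tvx m k) c1] := rfl
        rw [hconfs] at hx
        simp only [List.mem_cons, List.mem_singleton, List.not_mem_nil, or_false] at hx
        have hbE : ∀ v ∈ ({bvx m (p+1)} : Finset (BRGraph m).V),
            ∃ i : Fin (2 ^ m), v = Sum.inl i := by
          intro v hv
          rw [Finset.mem_singleton] at hv
          exact ⟨_, hv⟩
        rcases hx with rfl | rfl
        · refine ⟨false, {bvx m (p+1)}, hbE, by simp, ?_⟩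
          rw [hc1]
          ext v
          simp [or_comm]
        · refine ⟨true, {bvx m (p+1)}, hbE, by simp, ?_⟩
          rw [hc1]
          ext v
          simp
          tauto
      · rw [hmidrun] at hx
        obtain ⟨y, hy, rfl⟩ := N3 x hx
        obtain ⟨E, hE, hEc, rfl⟩ := C1 y (I3 y hy)
        refine ⟨true, E, hE, hEc, ?_⟩
        ext v
        simp

theorem bit_reversal_reversible_pebbling_price' (m : ℕ) (hm : 1 ≤ m) :
    ∃ (t : ℕ) (P : ℕ → Set (BRGraph m).V),
      (BRGraph m).IsRevPebbling (brSink m) t P ∧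
      (BRGraph m).space t P ≤ 2 * m + 2 := by
  have hn : 0 < 2 ^ m := npow_pos
  set TransB : (BRGraph m).V → Prop := fun v => ∃ i : Fin (2 ^ m), v = Sum.inl i with hTB
  have Hinj : ∀ k k' : ℕ, 0 < k → k ≤ 0 + 2 ^ m → 0 < k' → k' ≤ 0 + 2 ^ m →
      tvx m k = tvx m k' → k = k' := fun k k' a b a' b' he =>
    tvx_inj (by omega) (by omega) (by omega) (by omega) he
  have Htr : ∀ k : ℕ, 0 < k → k ≤ 0 + 2 ^ m → ¬ TransB (tvx m k) := by
    rintro k _ _ ⟨i, hi⟩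
    simp [tvx] at hi
  have Hmk : ∀ (k : ℕ) (c' : Finset (BRGraph m).V), 0 < k → k ≤ 0 + 2 ^ m →
      (k = 1 ∨ tvx m (k - 1) ∈ c') → tvx m k ∉ c' → (∀ v ∈ c', ¬ TransB v) →
      Legal (BRGraph m) c' (tmk m k) ∧
      runc (BRGraph m) c' (tmk m k) = insert (tvx m k) c' ∧
      (∀ a ∈ tmk m k, a.2 = tvx m k ∨ TransB a.2) ∧
      (∀ x ∈ confs (BRGraph m) c' (tmk m k), ∃ (b : Bool) (E : Finset (BRGraph m).V),
          (∀ v ∈ E, TransB v) ∧ E.card ≤ m + 1 ∧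
          x = (c' ∪ (if b then {tvx m k} else ∅)) ∪ E) :=
    fun k c' h1 h2 h3 h4 h5 => tmk_spec k c' h1 (by omega) h3 h4 h5
  obtain ⟨TL, TR, TV, TC⟩ := put_spec (G := BRGraph m) br_noselfloop (tvx m) (tmk m)
    TransB (m + 1) (2 ^ m) 0 ∅ (by omega) Hinj Htr Hmk (Or.inl rfl) (by simp) (by simp)
  set tp := put (BRGraph m) (tmk m) 0 (2 ^ m) with htp
  obtain ⟨J1, J2, J3⟩ := invm_spec br_noselfloop tp ∅ TL
  set W := tp ++ invm (BRGraph m) tp with hW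
  have LW : Legal (BRGraph m) ∅ W := by
    rw [hW, legal_append]
    exact ⟨TL, J1⟩
  have RW : runc (BRGraph m) ∅ W = ∅ := by
    rw [hW, runc_append]
    exact J2
  refine ⟨W.length, fun i => ↑(runc (BRGraph m) ∅ (W.take i)), ⟨?_, ?_, ?_, ?_⟩, ?_⟩
  · show ((runc (BRGraph m) ∅ (W.take 0) : Finset (BRGraph m).V) : Set (BRGraph m).V) = ∅
    rw [List.take_zero]
    exact Finset.coe_empty
  · show ((runc (BRGraph m) ∅ (W.take W.length) : Finset (BRGraph m).V) : Set (BRGraph m).V) = ∅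
    rw [List.take_length, RW]
    exact Finset.coe_empty
  · refine ⟨tp.length, ?_, ?_⟩
    · rw [hW, List.length_append]; omega
    · show brSink m ∈ ((runc (BRGraph m) ∅ (W.take tp.length) : Finset (BRGraph m).V) : Set (BRGraph m).V)
      have htake : W.take tp.length = tp := by rw [hW]; exact List.take_left
      rw [htake, TR]
      have hsink : brSink m = tvx m (0 + 2 ^ m) := by
        rw [Nat.zero_add, tvx_val le_rfl]
        rfl
      rw [hsink]
      simp
  · intro i hi
    exact move_take W i ∅ LW hi
  · unfold FinDigraph.space
    apply Finset.sup_le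
    intro i _
    show ((runc (BRGraph m) ∅ (W.take i) : Finset (BRGraph m).V) : Set (BRGraph m).V).ncard ≤ 2 * m + 2
    rw [Set.ncard_coe_finset]
    have hmem := runc_take_mem W i (∅ : Finset (BRGraph m).V)
    rw [hW] at hmem
    have hmem2 : runc (BRGraph m) ∅ (W.take i) ∈ confs (BRGraph m) ∅ tp := by
      rw [hW]
      rcases mem_confs_append hmem with h | h
      · exact h
      · exact J3 _ h
    obtain ⟨S, E, hS, hSc, hE, hEc, heq⟩ := TC _ hmem2
    rw [heq]
    calc ((∅ ∪ S.image (tvx m)) ∪ E).card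
        ≤ (∅ ∪ S.image (tvx m)).card + E.card := Finset.card_union_le _ _
      _ ≤ S.card + E.card := by
          rw [Finset.empty_union]
          exact Nat.add_le_add_right Finset.card_image_le _
      _ ≤ 2 * m + 2 := by
          have hcl : Nat.clog 2 (2 ^ m) = m := Nat.clog_pow 2 m (by norm_num)
          omega


/-- For `n = 2^m` with `m ≥ 1`, the bit-reversal permutation graph on `2n`
vertices has reversible pebbling price at most `2 * log₂ n + 2 = 2 * m + 2`. -/
theorem bit_reversal_reversible_pebbling_price (m : ℕ) (hm : 1 ≤ m) :
    ∃ (t : ℕ) (P : ℕ → Set (BRGraph m).V),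
      (BRGraph m).IsRevPebbling (brSink m) t P ∧
      (BRGraph m).space t P ≤ 2 * m + 2 := by
  exact bit_reversal_reversible_pebbling_price' m hm
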